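/- Let X be a Polish space and ℓ : X → ℝ a bounded continuous function with ℓ(θ) > 0 for every θ ∈ X. Define the posterior map Ψ : P(X) → P(X) by Ψ(π)(B) = (∫_B ℓ dπ) / (∫_X ℓ dπ) for Borel sets B (equivalently, Ψ(π) is the probability measure with density ℓ / ∫ℓ dπ with respect to π). Then Ψ is continuous for the topology of weak convergence on P(X). -/

import Mathlib

open MeasureTheory
open scoped ENNReal NNReal

theorem stmt_10
    {X : Type*} [TopologicalSpace X] [PolishSpace X] [MeasurableSpace X] [BorelSpace X]
    (ℓ : X → ℝ) (hℓc : Continuous ℓ) (hℓb : ∃ C : ℝ, ∀ x, |ℓ x| ≤ C) (hℓpos : ∀ θ, 0 < ℓ θ)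
    (Ψ : ProbabilityMeasure X → ProbabilityMeasure X)
    (hΨ : ∀ (π : ProbabilityMeasure X) (B : Set X), MeasurableSet B →
      (Ψ π : Measure X) B =
        ENNReal.ofReal ((∫ x in B, ℓ x ∂(π : Measure X)) / ∫ x, ℓ x ∂(π : Measure X))) :
    Continuous Ψ := by
  obtain ⟨C, hC⟩ := hℓb
  -- ℓ as a bounded continuous function
  set L : BoundedContinuousFunction X ℝ :=
    BoundedContinuousFunction.ofNormedAddCommGroup ℓ hℓc C
      (fun x => by simpa using hC x) with hL
  have hLapp : ∀ x, L x = ℓ x := fun x => rfl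
  -- positivity of the normalizing constant
  have hZpos : ∀ π : ProbabilityMeasure X, 0 < ∫ x, ℓ x ∂(π : Measure X) := by
    intro π
    have hint : Integrable ℓ (π : Measure X) := by
      exact L.integrable (π : Measure X)
    rw [integral_pos_iff_support_of_nonneg (fun x => (hℓpos x).le) hint]
    have : Function.support ℓ = Set.univ := by
      ext x; simp [Function.support, (hℓpos x).ne']
    simp [this]
  -- the key formula for integrals against Ψ π
  have key : ∀ (π : ProbabilityMeasure X) (f : BoundedContinuousFunction X ℝ),
      ∫ x, f x ∂(Ψ π : Measure X) =
        (∫ x, ℓ x * f x ∂(π : Measure X)) / ∫ x, ℓ x ∂(π : Measure X) := by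
    intro π f
    set Z := ∫ x, ℓ x ∂(π : Measure X) with hZ
    have hZ0 : 0 < Z := hZpos π
    have hint : Integrable ℓ (π : Measure X) := by
      exact L.integrable (π : Measure X)
    have hdens : (Ψ π : Measure X) =
        (π : Measure X).withDensity (fun x => ((ℓ x / Z).toNNReal : ℝ≥0∞)) := by
      ext B hB
      rw [hΨ π B hB, withDensity_apply _ hB]
      have hintB : Integrable (fun x => ℓ x / Z) ((π : Measure X).restrict B) :=
        (hint.restrict.div_const Z)
      rw [show (fun x => ((ℓ x / Z).toNNReal : ℝ≥0∞)) = fun x => ENNReal.ofReal (ℓ x / Z)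
        from rfl]
      rw [← ofReal_integral_eq_lintegral_ofReal hintB
        (Filter.Eventually.of_forall fun x => div_nonneg (hℓpos x).le hZ0.le)]
      rw [integral_div]
    rw [hdens, integral_withDensity_eq_integral_smul]
    · have : ∀ x, (ℓ x / Z).toNNReal • f x = (ℓ x * f x) / Z := by
        intro x
        rw [NNReal.smul_def, Real.coe_toNNReal _ (div_nonneg (hℓpos x).le hZ0.le),
          smul_eq_mul]
        ring
      simp only [this]
      rw [integral_div]
    · exact (continuous_real_toNNReal.comp (hℓc.div_const Z)).measurable
  -- continuity via the portmanteau characterization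
  rw [continuous_iff_continuousAt]
  intro π
  rw [ContinuousAt, ProbabilityMeasure.tendsto_iff_forall_integral_tendsto]
  intro f
  simp only [key]
  have htendsto : ∀ g : BoundedContinuousFunction X ℝ,
      Filter.Tendsto (fun π' : ProbabilityMeasure X => ∫ x, g x ∂(π' : Measure X))
        (nhds π) (nhds (∫ x, g x ∂(π : Measure X))) :=
    ProbabilityMeasure.tendsto_iff_forall_integral_tendsto.mp Filter.tendsto_id
  have h1 := htendsto (L * f)
  have h2 := htendsto L
  simp only [BoundedContinuousFunction.coe_mul, Pi.mul_apply, hLapp] at h1 h2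
  exact Filter.Tendsto.div h1 h2 (hZpos π).ne'
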